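/- arXiv:2201.02744 — 3 statements merged into one kernel-verified Lean document; each statement's English description precedes it below -/
import Mathlib

section
/- For any composition ω and any natural number q, the set of compositions ω' with ω ⪰ ω' (i.e., ω' = ω or ω' is obtained from ω by a finite sequence of elementary merges and inserts) and with reduced norm |ω'|' ≤ q, is finite. Consequently, any closed subposet of the poset of compositions generated by finitely many maximal elements is profinite, i.e., for every q ≥ 0 it contains only finitely many elements of reduced norm ≤ q. -/
/-- The merge operation (0-indexed at `i`): replace the adjacent entries at
positions `i` and `i+1` by their sum. -/
def mergeAt (l : List ℕ) (i : ℕ) : List ℕ :=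
  l.take i ++ [l.getD i 0 + l.getD (i + 1) 0] ++ l.drop (i + 2)

/-- The insert operation: insert a new entry `2` after the `j`-th entry. -/
def insertAt2 (l : List ℕ) (j : ℕ) : List ℕ :=
  l.take j ++ [2] ++ l.drop j

/-- One elementary operation: either a merge or an insert. -/
def ElemStep (l l' : List ℕ) : Prop :=
  (∃ i, i + 1 < l.length ∧ l' = mergeAt l i) ∨ (∃ j, j ≤ l.length ∧ l' = insertAt2 l j)

/-- `ω ⪰ ω'`: `ω'` is obtained from `ω` by a possibly empty finite sequence of
elementary merges and inserts. -/
def Below (l l' : List ℕ) : Prop := Relation.ReflTransGen ElemStep l l'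

/-- The reduced norm `|ω|'` of a composition. -/
def rnormC (l : List ℕ) : ℕ := (l.map (· - 1)).sum

lemma rnormC_append (a b : List ℕ) : rnormC (a ++ b) = rnormC a + rnormC b := by
  simp [rnormC]

lemma rnormC_cons (a : ℕ) (l : List ℕ) : rnormC (a :: l) = (a - 1) + rnormC l := by
  simp [rnormC]

lemma step_ineq {l l' : List ℕ} (h : ElemStep l l') :
    l'.length + rnormC l ≤ l.length + rnormC l' := by
  rcases h with ⟨i, hi, rfl⟩ | ⟨j, hj, rfl⟩
  · have h1 : i < l.length := by omega
    have hd : l.drop i = l[i] :: l[i+1] :: l.drop (i+2) := by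
      rw [List.drop_eq_getElem_cons h1, List.drop_eq_getElem_cons hi]
    have hsplit : rnormC l = rnormC (l.take i) + rnormC (l.drop i) := by
      rw [← rnormC_append, List.take_append_drop]
    have hlen : (mergeAt l i).length = l.length - 1 := by
      simp [mergeAt]; omega
    have hg1 : l.getD i 0 = l[i] := List.getD_eq_getElem l 0 h1
    have hg2 : l.getD (i+1) 0 = l[i+1] := List.getD_eq_getElem l 0 hi
    have hr : rnormC (mergeAt l i)
        = rnormC (l.take i) + (l[i] + l[i+1] - 1 + 0) + rnormC (l.drop (i+2)) := by
      unfold mergeAt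
      rw [rnormC_append, rnormC_append, hg1, hg2, rnormC_cons]
      simp [rnormC]
    have hd' : rnormC (l.drop i) = (l[i] - 1) + ((l[i+1] - 1) + rnormC (l.drop (i+2))) := by
      rw [hd, rnormC_cons, rnormC_cons]
    omega
  · have hlen : (insertAt2 l j).length = l.length + 1 := by
      simp [insertAt2]; omega
    have hsplit : rnormC l = rnormC (l.take j) + rnormC (l.drop j) := by
      rw [← rnormC_append, List.take_append_drop]
    have hr : rnormC (insertAt2 l j)
        = rnormC (l.take j) + (1 + 0) + rnormC (l.drop j) := by
      unfold insertAt2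
      rw [rnormC_append, rnormC_append, rnormC_cons]
      simp [rnormC]
    omega

lemma below_ineq {l l' : List ℕ} (h : Below l l') :
    l'.length + rnormC l ≤ l.length + rnormC l' := by
  induction h with
  | refl => exact le_refl _
  | tail _ hbc ih => have := step_ineq hbc; omega

lemma finite_bdd (N M : ℕ) : {l : List ℕ | l.length ≤ N ∧ ∀ x ∈ l, x ≤ M}.Finite := by
  induction N with
  | zero =>
    apply Set.Finite.subset (Set.finite_singleton ([] : List ℕ))
    rintro l ⟨hl, -⟩
    simpa using List.length_eq_zero_iff.mp (Nat.le_zero.mp hl)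
  | succ N ih =>
    apply Set.Finite.subset
      ((((Set.finite_Iic M).prod ih).image (fun p => p.1 :: p.2)).insert [])
    rintro (_ | ⟨a, t⟩) ⟨hl, hb⟩
    · exact Set.mem_insert _ _
    · right
      refine ⟨(a, t), ⟨hb a (by simp), ?_, fun x hx => hb x (by simp [hx])⟩, rfl⟩
      show t.length ≤ N
      simp at hl; omega

/-- For any composition `ω` and any `q`, the set of `ω'` with `ω ⪰ ω'` and `|ω'|' ≤ q`
is finite; consequently any closed subposet generated by finitely many elements is
profinite. -/
theorem downset_finite_and_finitely_generated_profinite :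
    (∀ (ω : List ℕ), (∀ x ∈ ω, 1 ≤ x) → ∀ q : ℕ,
      {ω' : List ℕ | Below ω ω' ∧ rnormC ω' ≤ q}.Finite) ∧
    (∀ (S : Finset (List ℕ)), (∀ ω ∈ S, ∀ x ∈ ω, 1 ≤ x) → ∀ q : ℕ,
      {ω' : List ℕ | (∃ ω ∈ S, Below ω ω') ∧ rnormC ω' ≤ q}.Finite) := by
  have main : ∀ (ω : List ℕ), ∀ q : ℕ,
      {ω' : List ℕ | Below ω ω' ∧ rnormC ω' ≤ q}.Finite := by
    intro ω q
    apply (finite_bdd (ω.length + q) (q + 1)).subset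
    rintro ω' ⟨hb, hq⟩
    constructor
    · have := below_ineq hb; omega
    · intro x hx
      have hx1 : x - 1 ≤ rnormC ω' :=
        List.single_le_sum (fun y _ => Nat.zero_le y) _ (List.mem_map_of_mem hx)
      omega
  refine ⟨fun ω _ q => main ω q, fun S _ q => ?_⟩
  have hsub : {ω' : List ℕ | (∃ ω ∈ S, Below ω ω') ∧ rnormC ω' ≤ q}
      ⊆ ⋃ ω ∈ S, {ω' : List ℕ | Below ω ω' ∧ rnormC ω' ≤ q} := by
    rintro ω' ⟨⟨ω, hω, hb⟩, hq⟩
    exact Set.mem_biUnion hω ⟨hb, hq⟩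
  exact (Set.Finite.biUnion S.finite_toSet (fun ω _ => main ω q)).subset hsub
end

section
/- Let Z[Ω] be the free abelian group on the set Ω of all compositions, and define ∂_M : Z[Ω] → Z[Ω] on generators by ∂_M(ω) = −Σ_{k=1}^{s−1} (−1)^k M_k(ω), where s is the length of ω and M_k is the k-th merge. Then ∂_M is a differential: ∂_M ∘ ∂_M = 0. -/
/-- `∂_M(ω) = −Σ_{k=1}^{s−1} (−1)^k M_k(ω)`, where `s` is the length of `ω`,
as an element of the free abelian group `ℤ[Ω]` on compositions. -/
noncomputable def dM (ω : List ℕ) : List ℕ →₀ ℤ :=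
  -∑ k ∈ Finset.Ico 1 ω.length, ((-1 : ℤ) ^ k) • Finsupp.single (mergeAt ω (k - 1)) (1 : ℤ)

/-- The merge differential `∂_M : ℤ[Ω] → ℤ[Ω]`, extended ℤ-linearly from generators. -/
noncomputable def boundaryM : (List ℕ →₀ ℤ) →ₗ[ℤ] (List ℕ →₀ ℤ) :=
  Finsupp.lsum ℤ fun ω => LinearMap.toSpanSingleton ℤ _ (dM ω)

lemma mergeAt_cons (x : ℕ) (l : List ℕ) (i : ℕ) :
    mergeAt (x :: l) (i + 1) = x :: mergeAt l i := by
  simp [mergeAt]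

lemma length_mergeAt (l : List ℕ) (i : ℕ) (h : i + 2 ≤ l.length) :
    (mergeAt l i).length = l.length - 1 := by
  simp [mergeAt]; omega

lemma mergeAt_comm : ∀ (ω : List ℕ) (i j : ℕ), i ≤ j → j + 2 ≤ ω.length →
    mergeAt (mergeAt ω (j + 1)) i = mergeAt (mergeAt ω i) j := by
  intro ω i
  induction i generalizing ω with
  | zero =>
    intro j _ hlen
    match ω, j with
    | x :: y :: l, 0 =>
      cases l with
      | nil => simp [mergeAt]
      | cons z t => simp [mergeAt]; ring
    | x :: y :: l, j + 1 =>
      simp only [mergeAt_cons]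
      simp [mergeAt]
  | succ i ih =>
    intro j hij hlen
    match ω, j, hij with
    | x :: l, j + 1, hij =>
      simp only [mergeAt_cons]
      rw [ih l j (by omega) (by simp at hlen; omega)]

lemma boundaryM_single (ω : List ℕ) : boundaryM (Finsupp.single ω 1) = dM ω := by
  simp [boundaryM]

lemma boundaryM_dM (ω : List ℕ) : boundaryM (dM ω) = 0 := by
  rw [dM, map_neg, map_sum]
  simp only [map_smul, boundaryM_single]
  rw [Finset.sum_congr rfl (fun k hk => by
    rw [dM, length_mergeAt ω (k - 1)
      (by simp [Finset.mem_Ico] at hk; omega)])]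
  simp only [smul_neg, Finset.smul_sum, smul_smul, ← pow_add, Finset.sum_neg_distrib,
    neg_neg]
  rw [← Finset.sum_product']
  apply Finset.sum_involution
    (g := fun p _ => if p.1 ≤ p.2 then (p.2 + 1, p.1) else (p.2, p.1 - 1))
  · -- f a + f (g a) = 0
    rintro ⟨k, l⟩ ha
    simp only [Finset.mem_product, Finset.mem_Ico] at ha
    by_cases h : k ≤ l
    · simp only [h, if_pos]
      have hc : mergeAt (mergeAt ω (l + 1 - 1)) (k - 1)
          = mergeAt (mergeAt ω (k - 1)) (l - 1) := by
        have := mergeAt_comm ω (k - 1) (l - 1) (by omega) (by omega)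
        have hl : l - 1 + 1 = l := by omega
        rw [hl] at this
        simpa using this
      rw [hc]
      have hs : (-1 : ℤ) ^ (l + 1 + k) = -(-1 : ℤ) ^ (k + l) := by
        have : l + 1 + k = (k + l) + 1 := by ring
        rw [this, pow_succ]; ring
      rw [hs]; ring_nf; simp
    · rw [if_neg h]
      have hc : mergeAt (mergeAt ω (l - 1)) (k - 1 - 1)
          = mergeAt (mergeAt ω (k - 1)) (l - 1) := by
        have := mergeAt_comm ω (l - 1) (k - 1 - 1) (by omega) (by omega)
        have hk : k - 1 - 1 + 1 = k - 1 := by omega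
        rw [hk] at this
        exact this.symm
      simp only
      rw [hc]
      have hs : (-1 : ℤ) ^ (l + (k - 1)) = -(-1 : ℤ) ^ (k + l) := by
        have : k + l = (l + (k - 1)) + 1 := by omega
        rw [this, pow_succ]; ring
      rw [hs]; ring_nf; simp
  · -- g a ≠ a when f a ≠ 0
    rintro ⟨k, l⟩ ha _
    simp only [Finset.mem_product, Finset.mem_Ico] at ha
    by_cases h : k ≤ l
    · rw [if_pos h]; simp [Prod.ext_iff]; omega
    · rw [if_neg h]; simp [Prod.ext_iff]; omega
  · -- g (g a) = a
    rintro ⟨k, l⟩ ha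
    simp only [Finset.mem_product, Finset.mem_Ico] at ha
    dsimp only
    by_cases h : k ≤ l
    · rw [if_pos h]
      rw [if_neg (by omega : ¬ l + 1 ≤ k)]
      simp
    · rw [if_neg h]
      rw [if_pos (by omega : l ≤ k - 1)]
      simp [Prod.ext_iff]; omega
  · -- g a ∈ s
    rintro ⟨k, l⟩ ha
    simp only [Finset.mem_product, Finset.mem_Ico] at ha
    dsimp only
    by_cases h : k ≤ l
    · rw [if_pos h]
      simp only [Finset.mem_product, Finset.mem_Ico]
      omega
    · rw [if_neg h]
      simp only [Finset.mem_product, Finset.mem_Ico]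
      omega

/-- `∂_M` is a differential: `∂_M ∘ ∂_M = 0`. -/
theorem boundaryM_comp_boundaryM : boundaryM.comp boundaryM = 0 := by
  apply Finsupp.lhom_ext
  intro ω b
  have : (Finsupp.single ω b : List ℕ →₀ ℤ) = b • Finsupp.single ω 1 := by
    simp [Finsupp.smul_single]
  rw [LinearMap.comp_apply, this, map_smul, boundaryM_single, map_smul, boundaryM_dM,
    smul_zero, LinearMap.zero_apply]
end

section
/- Fix d ≥ 0 and a finite multiset D of real numbers (a finite set of real numbers r each with a prescribed multiplicity m_r ≥ 1). Then the set of monic real polynomials P of degree d whose real roots, counted with multiplicity, are given exactly by D (i.e., for each real u, the multiplicity of u as a root of P equals the multiplicity of u in D) is a convex subset of the real vector space of polynomials: if P₀ and P₁ both belong to this set and t ∈ [0,1], then (1−t)P₀ + tP₁ also belongs to it. -/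
open Polynomial

lemma eval_pos_of_monic_of_no_root (Q : Polynomial ℝ) (hQ : Q.Monic)
    (h : ∀ x : ℝ, ¬ Q.IsRoot x) : ∀ x : ℝ, 0 < Q.eval x := by
  intro x
  by_contra hx
  push_neg at hx
  have hxlt : Q.eval x < 0 := hx.lt_of_ne (fun h' => h x h')
  rcases eq_or_lt_of_le (Nat.zero_le Q.natDegree) with h0 | h0
  · have : Q = 1 := hQ.natDegree_eq_zero.mp h0.symm
    simp [this] at hxlt
    linarith
  · have hdeg : 0 < Q.degree := by
      rw [← natDegree_pos_iff_degree_pos]; exact h0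
    have htend := Polynomial.tendsto_atTop_of_leadingCoeff_nonneg Q hdeg (by
      rw [hQ.leadingCoeff]; norm_num)
    obtain ⟨y, hy⟩ := ((htend.eventually_ge_atTop 1).and (Filter.eventually_ge_atTop x)).exists
    have hcont : ContinuousOn (fun z => Q.eval z) (Set.Icc x y) :=
      (Polynomial.continuous Q).continuousOn
    have : (0 : ℝ) ∈ Set.Icc (Q.eval x) (Q.eval y) := ⟨hxlt.le, by linarith [hy.1]⟩
    obtain ⟨z, _, hz⟩ := intermediate_value_Icc hy.2 hcont this
    exact h z hz

/-- The set of monic real polynomials of degree `d` whose real roots counted with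
multiplicity are given exactly by a fixed finite multiset `D` is convex: a convex
combination of two such polynomials is again one. -/
theorem convexity_of_fixed_real_divisor (d : ℕ) (D : Multiset ℝ)
    (P₀ P₁ : Polynomial ℝ)
    (h₀ : P₀.Monic ∧ P₀.natDegree = d ∧ ∀ u : ℝ, rootMultiplicity u P₀ = D.count u)
    (h₁ : P₁.Monic ∧ P₁.natDegree = d ∧ ∀ u : ℝ, rootMultiplicity u P₁ = D.count u)
    (t : ℝ) (ht : t ∈ Set.Icc (0 : ℝ) 1) :
    ((1 - t) • P₀ + t • P₁).Monic ∧ ((1 - t) • P₀ + t • P₁).natDegree = d ∧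
      ∀ u : ℝ, rootMultiplicity u ((1 - t) • P₀ + t • P₁) = D.count u := by
  obtain ⟨hm₀, hd₀, hr₀⟩ := h₀
  obtain ⟨hm₁, hd₁, hr₁⟩ := h₁
  obtain ⟨ht0, ht1⟩ := ht
  set R : Polynomial ℝ := (D.map fun a => X - C a).prod with hRdef
  have hRm : R.Monic := monic_multiset_prod_of_monic _ _ (fun a _ => monic_X_sub_C a)
  have hRroots : R.roots = D := roots_multiset_prod_X_sub_C D
  -- roots of P₀, P₁ are D
  have hroots₀ : P₀.roots = D := Multiset.ext.mpr fun u => by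
    rw [count_roots, hr₀]
  have hroots₁ : P₁.roots = D := Multiset.ext.mpr fun u => by
    rw [count_roots, hr₁]
  have hdvd₀ : R ∣ P₀ := by rw [hRdef, ← hroots₀]; exact prod_multiset_X_sub_C_dvd P₀
  have hdvd₁ : R ∣ P₁ := by rw [hRdef, ← hroots₁]; exact prod_multiset_X_sub_C_dvd P₁
  obtain ⟨Q₀, hQ₀⟩ := hdvd₀
  obtain ⟨Q₁, hQ₁⟩ := hdvd₁
  have hQm₀ : Q₀.Monic := hRm.of_mul_monic_left (hQ₀ ▸ hm₀)
  have hQm₁ : Q₁.Monic := hRm.of_mul_monic_left (hQ₁ ▸ hm₁)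
  have hQ₀ne : Q₀ ≠ 0 := hQm₀.ne_zero
  have hQ₁ne : Q₁ ≠ 0 := hQm₁.ne_zero
  have hQ₀roots : Q₀.roots = 0 := by
    have h := roots_mul (p := R) (q := Q₀) (by rw [← hQ₀]; exact hm₀.ne_zero)
    rw [← hQ₀, hroots₀, hRroots] at h
    exact (left_eq_add.mp h)
  have hQ₁roots : Q₁.roots = 0 := by
    have h := roots_mul (p := R) (q := Q₁) (by rw [← hQ₁]; exact hm₁.ne_zero)
    rw [← hQ₁, hroots₁, hRroots] at h
    exact (left_eq_add.mp h)
  have hnoroot₀ : ∀ x : ℝ, ¬ Q₀.IsRoot x := fun x hx => by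
    have : x ∈ Q₀.roots := (mem_roots hQ₀ne).mpr hx
    simp [hQ₀roots] at this
  have hnoroot₁ : ∀ x : ℝ, ¬ Q₁.IsRoot x := fun x hx => by
    have : x ∈ Q₁.roots := (mem_roots hQ₁ne).mpr hx
    simp [hQ₁roots] at this
  have hpos₀ := eval_pos_of_monic_of_no_root Q₀ hQm₀ hnoroot₀
  have hpos₁ := eval_pos_of_monic_of_no_root Q₁ hQm₁ hnoroot₁
  set Q : Polynomial ℝ := (1 - t) • Q₀ + t • Q₁ with hQdef
  have hQpos : ∀ x : ℝ, 0 < Q.eval x := by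
    intro x
    have e : Q.eval x = (1 - t) * Q₀.eval x + t * Q₁.eval x := by
      simp [hQdef]
    rw [e]
    rcases lt_or_eq_of_le ht1 with h | h
    · have := mul_pos (by linarith : (0:ℝ) < 1 - t) (hpos₀ x)
      nlinarith [mul_nonneg ht0 (hpos₁ x).le]
    · subst h; simpa using hpos₁ x
  have hQne : Q ≠ 0 := fun h => by simpa [h] using hQpos 0
  -- degrees
  have hdeg₀ : R.natDegree + Q₀.natDegree = d := by
    rw [← hRm.natDegree_mul hQm₀, ← hQ₀, hd₀]
  have hdeg₁ : R.natDegree + Q₁.natDegree = d := by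
    rw [← hRm.natDegree_mul hQm₁, ← hQ₁, hd₁]
  have hQ₁deg : Q₁.natDegree = Q₀.natDegree := by omega
  have hQcoeff : Q.coeff Q₀.natDegree = 1 := by
    rw [hQdef, coeff_add, coeff_smul, coeff_smul, hQm₀.coeff_natDegree,
      ← hQ₁deg, hQm₁.coeff_natDegree]
    simp
  have hQdegle : Q.natDegree ≤ Q₀.natDegree :=
    (natDegree_add_le _ _).trans (max_le
      ((natDegree_smul_le _ _).trans le_rfl)
      ((natDegree_smul_le _ _).trans hQ₁deg.le))
  have hQmonic : Q.Monic := monic_of_natDegree_le_of_coeff_eq_one _ hQdegle hQcoeff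
  have hQdeg : Q.natDegree = Q₀.natDegree :=
    le_antisymm hQdegle (le_natDegree_of_ne_zero (by rw [hQcoeff]; exact one_ne_zero))
  have hPRQ : (1 - t) • P₀ + t • P₁ = R * Q := by
    rw [hQ₀, hQ₁, hQdef]
    simp only [smul_eq_C_mul]
    ring
  rw [hPRQ]
  refine ⟨hRm.mul hQmonic, ?_, ?_⟩
  · rw [hRm.natDegree_mul hQmonic, hQdeg]; omega
  · intro u
    rw [rootMultiplicity_mul (mul_ne_zero hRm.ne_zero hQne),
      rootMultiplicity_eq_zero (fun h => (hQpos u).ne' h), add_zero,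
      ← count_roots, hRroots]
end
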